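/- Let K be a commutative ring, let A be a (not necessarily unital) associative K-algebra, and let B be a two-sided ideal of A such that the quotient A/B is a finitely presented K-module. If B is finitely presented as a K-algebra, then A is finitely presented as a K-algebra. -/

import Mathlib

/-- The free non-unital associative `K`-algebra on `X`: the semigroup algebra of the free
semigroup `X⁺` over `K`. -/
abbrev FreeNUAlg (K X : Type*) [CommRing K] : Type _ := MonoidAlgebra K (FreeSemigroup X)

/-- The two-sided ideal (as a `K`-submodule closed under left and right multiplication)
generated by a set in a non-unital `K`-algebra. -/
def idealSpan (K : Type*) {A : Type*} [CommRing K] [NonUnitalRing A] [Module K A]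
    (s : Set A) : Submodule K A :=
  sInf {J : Submodule K A | s ⊆ J ∧ ∀ a b : A, b ∈ J → a * b ∈ J ∧ b * a ∈ J}

/-- A non-unital `K`-algebra is finitely generated if some finite subset generates it as a
`K`-algebra. -/
def NUAlgFG (K A : Type*) [CommRing K] [NonUnitalRing A] [Module K A]
    [IsScalarTower K A A] [SMulCommClass K A A] : Prop :=
  ∃ s : Finset A, NonUnitalAlgebra.adjoin K (s : Set A) = ⊤

/-- A non-unital `K`-algebra is finitely presented if it is isomorphic to the quotient of a
free algebra `K⟨X⟩` on a finite set `X` by a finitely generated two-sided ideal, i.e. there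
is a surjection from some `K⟨X⟩`, `X` finite, whose kernel is a finitely generated
two-sided ideal. -/
def NUAlgFP (K A : Type*) [CommRing K] [NonUnitalRing A] [Module K A]
    [IsScalarTower K A A] [SMulCommClass K A A] : Prop :=
  ∃ (n : ℕ) (f : FreeNUAlg K (Fin n) →ₙₐ[K] A),
    Function.Surjective f ∧
      ∃ s : Finset (FreeNUAlg K (Fin n)),
        ∀ x, f x = 0 ↔ x ∈ idealSpan K (s : Set (FreeNUAlg K (Fin n)))

set_option linter.unusedSectionVars false

set_option maxHeartbeats 1000000

section prelim

variable {K : Type*} [CommRing K]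
variable {A' : Type*} [NonUnitalRing A'] [Module K A']

theorem subset_idealSpan (s : Set A') : s ⊆ idealSpan K s :=
  fun _ hx => Submodule.mem_sInf.2 fun _ hJ => hJ.1 hx

theorem idealSpan_le {s : Set A'} {J : Submodule K A'}
    (h1 : s ⊆ J) (h2 : ∀ a b : A', b ∈ J → a * b ∈ J ∧ b * a ∈ J) :
    idealSpan K s ≤ J :=
  sInf_le ⟨h1, h2⟩

theorem mul_mem_idealSpan_left {s : Set A'} (a : A') {b : A'} (hb : b ∈ idealSpan K s) :
    a * b ∈ idealSpan K s :=
  Submodule.mem_sInf.2 fun J hJ => (hJ.2 a b (Submodule.mem_sInf.1 hb J hJ)).1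

theorem mul_mem_idealSpan_right {s : Set A'} (a : A') {b : A'} (hb : b ∈ idealSpan K s) :
    b * a ∈ idealSpan K s :=
  Submodule.mem_sInf.2 fun J hJ => (hJ.2 a b (Submodule.mem_sInf.1 hb J hJ)).2

variable [IsScalarTower K A' A'] [SMulCommClass K A' A']

/-- A non-unital alg hom as a linear map. -/
def nuaLinear {A'' : Type*} [NonUnitalRing A''] [Module K A'']
    (φ : A' →ₙₐ[K] A'') : A' →ₗ[K] A'' :=
  { toFun := φ, map_add' := map_add φ, map_smul' := map_smul φ }

@[simp] theorem nuaLinear_apply {A'' : Type*} [NonUnitalRing A''] [Module K A'']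
    (φ : A' →ₙₐ[K] A'') (x : A') : nuaLinear φ x = φ x := rfl

theorem apply_mem_idealSpan_image {A'' : Type*} [NonUnitalRing A''] [Module K A'']
    (φ : A' →ₙₐ[K] A'') {s : Set A'} {x : A'} (hx : x ∈ idealSpan K s) :
    φ x ∈ idealSpan K (φ '' s) := by
  have : idealSpan K s ≤ Submodule.comap (nuaLinear φ) (idealSpan K (φ '' s)) := by
    refine idealSpan_le (fun y hy => subset_idealSpan _ ⟨y, hy, rfl⟩) ?_
    intro a b hb
    constructor
    · have : φ (a * b) ∈ idealSpan K (φ '' s) := by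
        rw [map_mul]; exact mul_mem_idealSpan_left _ hb
      exact this
    · have : φ (b * a) ∈ idealSpan K (φ '' s) := by
        rw [map_mul]; exact mul_mem_idealSpan_right _ hb
      exact this
  exact this hx

/-- Lift a map on generators to the free non-unital algebra. -/
noncomputable def fLift {X : Type*} (g : X → A') : FreeNUAlg K X →ₙₐ[K] A' :=
  MonoidAlgebra.liftMagma K (FreeSemigroup.lift g)

@[simp] theorem fLift_gen {X : Type*} (g : X → A') (x : X) :
    fLift g (MonoidAlgebra.single (FreeSemigroup.of x) (1 : K)) = g x := by
  simp [fLift, MonoidAlgebra.liftMagma_apply_apply, Finsupp.sum_single_index]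

theorem freeExt {X : Type*} {φ ψ : FreeNUAlg K X →ₙₐ[K] A'}
    (h : ∀ x : X, φ (MonoidAlgebra.single (FreeSemigroup.of x) 1)
      = ψ (MonoidAlgebra.single (FreeSemigroup.of x) 1)) : φ = ψ := by
  apply MonoidAlgebra.nonUnitalAlgHom_ext
  intro w
  induction w with
  | ih1 x => exact h x
  | ih2 x y hx hy =>
    have e : (MonoidAlgebra.single (FreeSemigroup.of x * y) (1:K) : FreeNUAlg K X)
        = MonoidAlgebra.single (FreeSemigroup.of x) 1 * MonoidAlgebra.single y 1 := by
      rw [MonoidAlgebra.single_mul_single, one_mul]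
    rw [e, map_mul, map_mul, hx, hy]

theorem mem_of_single_mem {X : Type*} {W : Submodule K (FreeNUAlg K X)}
    (h : ∀ w : FreeSemigroup X, MonoidAlgebra.single w (1 : K) ∈ W)
    (g : FreeNUAlg K X) : g ∈ W := by
  induction g using MonoidAlgebra.induction with
  | zero => exact W.zero_mem
  | single_add w b f _ _ ih =>
    refine W.add_mem ?_ ih
    have := W.smul_mem b (h w)
    rwa [MonoidAlgebra.smul_single', mul_one] at this

end prelim


section transfer

variable {K : Type*} [CommRing K]
variable {A : Type*} [NonUnitalRing A] [Module K A] [IsScalarTower K A A] [SMulCommClass K A A]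

theorem nualgfp_of_finite {X : Type*} [Fintype X]
    (f : FreeNUAlg K X →ₙₐ[K] A) (hf : Function.Surjective f)
    (T : Finset (FreeNUAlg K X))
    (hker : ∀ x, f x = 0 ↔ x ∈ idealSpan K (T : Set (FreeNUAlg K X))) :
    NUAlgFP K A := by
  classical
  obtain ⟨e⟩ : Nonempty (X ≃ Fin (Fintype.card X)) := ⟨Fintype.equivFin X⟩
  set n := Fintype.card X
  let u : FreeNUAlg K (Fin n) →ₙₐ[K] FreeNUAlg K X :=
    fLift (fun j => MonoidAlgebra.single (FreeSemigroup.of (e.symm j)) 1)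
  let v : FreeNUAlg K X →ₙₐ[K] FreeNUAlg K (Fin n) :=
    fLift (fun x => MonoidAlgebra.single (FreeSemigroup.of (e x)) 1)
  have huv : ∀ x, u (v x) = x := by
    have : u.comp v = NonUnitalAlgHom.id K (FreeNUAlg K X) := by
      apply freeExt
      intro x
      simp [u, v]
    intro x
    exact congrArg (fun (h : FreeNUAlg K X →ₙₐ[K] FreeNUAlg K X) => h x) this
  have hvu : ∀ x, v (u x) = x := by
    have : v.comp u = NonUnitalAlgHom.id K (FreeNUAlg K (Fin n)) := by
      apply freeExt
      intro x
      simp [u, v]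
    intro x
    exact congrArg (fun (h : FreeNUAlg K (Fin n) →ₙₐ[K] FreeNUAlg K (Fin n)) => h x) this
  refine ⟨n, f.comp u, hf.comp (fun x => ⟨v x, huv x⟩), T.image v, fun x => ?_⟩
  have hTimage : (↑(T.image v) : Set (FreeNUAlg K (Fin n))) = v '' ↑T := Finset.coe_image
  rw [hTimage]
  constructor
  · intro h
    have : u x ∈ idealSpan K (T : Set (FreeNUAlg K X)) := (hker (u x)).1 h
    have := apply_mem_idealSpan_image v this
    rwa [hvu] at this
  · intro h
    have h2 := apply_mem_idealSpan_image u h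
    have himg : u '' (v '' (T : Set (FreeNUAlg K X))) = (T : Set (FreeNUAlg K X)) := by
      rw [Set.image_image]
      have : ∀ y ∈ (T : Set (FreeNUAlg K X)), u (v y) = y := fun y _ => huv y
      rw [Set.image_congr this]
      exact Set.image_id _
    rw [himg] at h2
    exact (hker (u x)).2 h2

end transfer

theorem idealSpan_mono {K : Type*} [CommRing K] {A' : Type*} [NonUnitalRing A'] [Module K A']
    {s₁ s₂ : Set A'} (h : s₁ ⊆ s₂) : idealSpan K s₁ ≤ idealSpan K s₂ :=
  idealSpan_le (h.trans (subset_idealSpan _))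
    (fun a b hb => ⟨mul_mem_idealSpan_left a hb, mul_mem_idealSpan_right a hb⟩)

section main

variable (K A : Type*) [CommRing K]
variable [NonUnitalRing A] [Module K A] [IsScalarTower K A A] [SMulCommClass K A A]
variable (B : NonUnitalSubalgebra K A)

theorem main_thm
    (hBl : ∀ a b : A, b ∈ B → a * b ∈ B) (hBr : ∀ a b : A, b ∈ B → b * a ∈ B)
    (hmod : Module.FinitePresentation K (A ⧸ B.toSubmodule))
    (hBfp : NUAlgFP K B) :
    NUAlgFP K A := by
  classical
  obtain ⟨n, f, hf, rs, hker⟩ := hBfp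
  obtain ⟨t, ht, hktfg⟩ := hmod.out
  obtain ⟨v, hv⟩ := hktfg
  set mkl := B.toSubmodule.mkQ with hmkl
  set lc := Finsupp.linearCombination K ((↑) : ↥t → A ⧸ B.toSubmodule) with hlcdef
  have hlcsurj : Function.Surjective lc := by
    rw [← LinearMap.range_eq_top, hlcdef]
    simpa only [Finsupp.range_linearCombination, Subtype.range_coe_subtype,
      Finset.setOf_mem] using ht
  choose a ha using fun i : ↥t => Submodule.mkQ_surjective B.toSubmodule (i : A ⧸ B.toSubmodule)
  choose P hP using hf
  choose μ hμ using hlcsurj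
  let Q : A → FreeNUAlg K (Fin n) := fun x => if h : x ∈ B then P ⟨x, h⟩ else 0
  have hQ : ∀ x, x ∈ B → ((f (Q x) : ↥B) : A) = x := by
    intro x h
    simp only [Q, dif_pos h, hP]
  -- generators
  let X := Fin n ⊕ ↥t
  let G := FreeNUAlg K X
  let gen : X → G := fun x => MonoidAlgebra.single (FreeSemigroup.of x) 1
  let Yg : ↥t → G := fun i => gen (Sum.inr i)
  let Xg : Fin n → G := fun j => gen (Sum.inl j)
  let bg : Fin n → A := fun j => ((f (MonoidAlgebra.single (FreeSemigroup.of j) 1) : ↥B) : A)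
  let φ : G →ₙₐ[K] A := fLift (Sum.elim bg a)
  let ι : FreeNUAlg K (Fin n) →ₙₐ[K] G := fLift (fun j => Xg j)
  have hφY : ∀ i, φ (Yg i) = a i := fun i => fLift_gen _ (Sum.inr i)
  have hφX : ∀ j, φ (Xg j) = bg j := fun j => fLift_gen _ (Sum.inl j)
  have hιgen : ∀ j, ι (MonoidAlgebra.single (FreeSemigroup.of j) 1) = Xg j :=
    fun j => fLift_gen _ j
  have hφι : ∀ c : FreeNUAlg K (Fin n), φ (ι c) = ((f c : ↥B) : A) := by
    have : φ.comp ι = (NonUnitalSubalgebraClass.subtype B).comp f := by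
      apply freeExt
      intro j
      show φ (ι (MonoidAlgebra.single (FreeSemigroup.of j) 1)) = _
      rw [hιgen j]
      exact (hφX j).trans rfl
    intro c
    exact congrArg (fun (h : FreeNUAlg K (Fin n) →ₙₐ[K] A) => h c) this
  -- linear combinations
  set al := Finsupp.linearCombination K a with haldef
  set gl := Finsupp.linearCombination K Yg with hgldef
  have hmkal : ∀ lam, mkl (al lam) = lc lam := by
    have h : mkl ∘ₗ al = lc := by
      apply Finsupp.lhom_ext
      intro i c
      simp only [LinearMap.comp_apply, haldef, hlcdef, Finsupp.linearCombination_single,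
        map_smul]
      rw [ha i]
    intro lam
    exact congrArg (fun (h : (↥t →₀ K) →ₗ[K] A ⧸ B.toSubmodule) => h lam) h
  have hφgl : ∀ lam, φ (gl lam) = al lam := by
    have h : (nuaLinear φ) ∘ₗ gl = al := by
      apply Finsupp.lhom_ext
      intro i c
      simp only [LinearMap.comp_apply, haldef, hgldef, Finsupp.linearCombination_single,
        map_smul, nuaLinear_apply]
      rw [hφY i]
    intro lam
    exact congrArg (fun (h : (↥t →₀ K) →ₗ[K] A) => h lam) h
  -- membership facts
  have hbgB : ∀ j, bg j ∈ B := fun j => (f _).2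
  have hmemB : ∀ x : A, mkl x = 0 → x ∈ B := by
    intro x hx
    have h2 : x ∈ B.toSubmodule := by
      rw [← Submodule.ker_mkQ B.toSubmodule]
      exact LinearMap.mem_ker.2 hx
    exact B.mem_toSubmodule.1 h2
  have hBmk : ∀ x : A, x ∈ B → mkl x = 0 := by
    intro x hx
    have : x ∈ B.toSubmodule := B.mem_toSubmodule.2 hx
    rw [hmkl]
    exact (Submodule.Quotient.mk_eq_zero _).2 this
  have habB : ∀ x : A, x - al (μ (mkl x)) ∈ B := by
    intro x
    apply hmemB
    rw [map_sub, hmkal, hμ, sub_self]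
  have hvB : ∀ w ∈ v, al w ∈ B := by
    intro w hw
    apply hmemB
    rw [hmkal]
    have h2 : w ∈ LinearMap.ker lc := hv ▸ Submodule.subset_span hw
    exact LinearMap.mem_ker.1 h2
  -- relations
  let rel1 : ↥t → ↥t → G := fun i k =>
    Yg i * Yg k - gl (μ (mkl (a i * a k))) - ι (Q (a i * a k - al (μ (mkl (a i * a k)))))
  let rel2 : ↥t → Fin n → G := fun i j => Yg i * Xg j - ι (Q (a i * bg j))
  let rel3 : Fin n → ↥t → G := fun j i => Xg j * Yg i - ι (Q (bg j * a i))
  let rel4 : (↥t →₀ K) → G := fun w => gl w - ι (Q (al w))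
  let T : Finset G := ((((rs.image ι ∪
      Finset.image (fun p : ↥t × ↥t => rel1 p.1 p.2) Finset.univ) ∪
      Finset.image (fun p : ↥t × Fin n => rel2 p.1 p.2) Finset.univ) ∪
      Finset.image (fun p : Fin n × ↥t => rel3 p.1 p.2) Finset.univ) ∪ v.image rel4)
  set J := idealSpan K (T : Set G) with hJdef
  have hTmem : ∀ x ∈ T, x ∈ J := fun x hx => subset_idealSpan _ hx
  have hJs : ∀ c ∈ rs, ι c ∈ J := by
    intro c hc
    exact hTmem _ (by
      simp only [T, Finset.mem_union]
      exact Or.inl (Or.inl (Or.inl (Or.inl (Finset.mem_image_of_mem _ hc)))))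
  have hJ1 : ∀ i k, rel1 i k ∈ J := by
    intro i k
    exact hTmem _ (by
      simp only [T, Finset.mem_union]
      exact Or.inl (Or.inl (Or.inl (Or.inr
        (Finset.mem_image.2 ⟨(i, k), Finset.mem_univ _, rfl⟩)))))
  have hJ2 : ∀ i j, rel2 i j ∈ J := by
    intro i j
    exact hTmem _ (by
      simp only [T, Finset.mem_union]
      exact Or.inl (Or.inl (Or.inr (Finset.mem_image.2 ⟨(i, j), Finset.mem_univ _, rfl⟩))))
  have hJ3 : ∀ j i, rel3 j i ∈ J := by
    intro j i
    exact hTmem _ (by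
      simp only [T, Finset.mem_union]
      exact Or.inl (Or.inr (Finset.mem_image.2 ⟨(j, i), Finset.mem_univ _, rfl⟩)))
  have hJ4 : ∀ w ∈ v, rel4 w ∈ J := by
    intro w hw
    exact hTmem _ (by
      simp only [T, Finset.mem_union]
      exact Or.inr (Finset.mem_image_of_mem _ hw))
  -- φ kills the relations
  have hφrel1 : ∀ i k, φ (rel1 i k) = 0 := by
    intro i k
    simp only [rel1, map_sub, map_mul, hφY, hφgl, hφι]
    rw [hQ _ (habB (a i * a k))]
    abel
  have hφrel2 : ∀ i j, φ (rel2 i j) = 0 := by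
    intro i j
    simp only [rel2, map_sub, map_mul, hφY, hφX, hφι]
    rw [hQ _ (hBl (a i) (bg j) (hbgB j)), sub_self]
  have hφrel3 : ∀ j i, φ (rel3 j i) = 0 := by
    intro j i
    simp only [rel3, map_sub, map_mul, hφY, hφX, hφι]
    rw [hQ _ (hBr (a i) (bg j) (hbgB j)), sub_self]
  have hφrel4 : ∀ w ∈ v, φ (rel4 w) = 0 := by
    intro w hw
    simp only [rel4, map_sub, hφgl, hφι]
    rw [hQ _ (hvB w hw), sub_self]
  have hφs : ∀ c ∈ rs, φ (ι c) = 0 := by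
    intro c hc
    rw [hφι]
    have : f c = 0 := (hker c).2 (subset_idealSpan _ (Finset.mem_coe.2 hc))
    rw [this]
    rfl
  have hφT : ∀ x ∈ (T : Set G), φ x = 0 := by
    intro x hx
    simp only [T, Finset.coe_union, Set.mem_union, Finset.mem_coe, Finset.mem_image,
      Finset.mem_union] at hx
    rcases hx with ((((⟨c, hc, rfl⟩ | ⟨p, _, rfl⟩) | ⟨p, _, rfl⟩) | ⟨p, _, rfl⟩) | ⟨w, hw, rfl⟩)
    · exact hφs _ hc
    · exact hφrel1 _ _
    · exact hφrel2 _ _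
    · exact hφrel3 _ _
    · exact hφrel4 _ hw
  have hJker : ∀ x ∈ J, φ x = 0 := by
    have : J ≤ LinearMap.ker (nuaLinear φ) := by
      apply idealSpan_le
      · intro x hx
        exact LinearMap.mem_ker.2 (hφT x hx)
      · intro x y hy
        have hy0 : φ y = 0 := LinearMap.mem_ker.1 hy
        constructor
        · refine LinearMap.mem_ker.2 ?_
          show φ (x * y) = 0
          rw [map_mul, hy0, mul_zero]
        · refine LinearMap.mem_ker.2 ?_
          show φ (y * x) = 0
          rw [map_mul, hy0, zero_mul]
    intro x hx
    exact LinearMap.mem_ker.1 (this hx)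
  -- surjectivity
  have hφsurj : Function.Surjective φ := by
    intro x
    refine ⟨gl (μ (mkl x)) + ι (Q (x - al (μ (mkl x)))), ?_⟩
    rw [map_add, hφgl, hφι, hQ _ (habB x)]
    abel
  -- reduction: every element of G lies in SY ⊔ (RI ⊔ J)
  let RI : Submodule K G := LinearMap.range (nuaLinear ι)
  let SY : Submodule K G := LinearMap.range gl
  let W : Submodule K G := SY ⊔ (RI ⊔ J)
  have hRIW : RI ≤ W := le_trans le_sup_left le_sup_right
  have hJW : J ≤ W := le_trans le_sup_right le_sup_right
  have hSYW : SY ≤ W := le_sup_left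
  have hYι : ∀ (i : ↥t) (c : FreeNUAlg K (Fin n)), Yg i * ι c ∈ RI ⊔ J := by
    intro i c
    have hsingle : ∀ w : FreeSemigroup (Fin n),
        Yg i * ι (MonoidAlgebra.single w 1) ∈ RI ⊔ J := by
      intro w
      induction w with
      | ih1 j =>
        have e : Yg i * ι (MonoidAlgebra.single (FreeSemigroup.of j) 1)
            = ι (Q (a i * bg j)) + rel2 i j := by
          rw [hιgen]
          simp only [rel2]
          abel
        rw [e]
        exact Submodule.add_mem _ (Submodule.mem_sup_left ⟨Q (a i * bg j), rfl⟩)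
          (Submodule.mem_sup_right (hJ2 i j))
      | ih2 j y _ _ =>
        have e1 : (MonoidAlgebra.single (FreeSemigroup.of j * y) (1 : K)
              : FreeNUAlg K (Fin n))
            = MonoidAlgebra.single (FreeSemigroup.of j) 1 * MonoidAlgebra.single y 1 := by
          rw [MonoidAlgebra.single_mul_single, one_mul]
        rw [e1, map_mul, hιgen, ← mul_assoc]
        have e2 : Yg i * Xg j = ι (Q (a i * bg j)) + rel2 i j := by
          simp only [rel2]
          abel
        rw [e2, add_mul]
        refine Submodule.add_mem _ ?_ ?_
        · rw [← map_mul]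
          exact Submodule.mem_sup_left ⟨_, rfl⟩
        · exact Submodule.mem_sup_right (mul_mem_idealSpan_right _ (hJ2 i j))
    have hc : c ∈ Submodule.comap ((LinearMap.mulLeft K (Yg i)).comp (nuaLinear ι)) (RI ⊔ J) := by
      apply mem_of_single_mem
      intro w
      exact Submodule.mem_comap.2 (hsingle w)
    exact Submodule.mem_comap.1 hc
  have hXgl : ∀ (j : Fin n) (lam : ↥t →₀ K), Xg j * gl lam ∈ RI ⊔ J := by
    intro j lam
    induction lam using Finsupp.induction with
    | zero => rw [map_zero, mul_zero]; exact Submodule.zero_mem _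
    | single_add i c rest _ _ ih =>
      rw [map_add, mul_add]
      refine Submodule.add_mem _ ?_ ih
      have e0 : gl (Finsupp.single i c) = c • Yg i := by
        rw [hgldef, Finsupp.linearCombination_single]
      rw [e0, mul_smul_comm]
      apply Submodule.smul_mem
      have e : Xg j * Yg i = ι (Q (bg j * a i)) + rel3 j i := by
        simp only [rel3]
        abel
      rw [e]
      exact Submodule.add_mem _ (Submodule.mem_sup_left ⟨_, rfl⟩)
        (Submodule.mem_sup_right (hJ3 j i))
  have hYgl : ∀ (i : ↥t) (lam : ↥t →₀ K), Yg i * gl lam ∈ W := by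
    intro i lam
    induction lam using Finsupp.induction with
    | zero => rw [map_zero, mul_zero]; exact Submodule.zero_mem _
    | single_add k c rest _ _ ih =>
      rw [map_add, mul_add]
      refine Submodule.add_mem _ ?_ ih
      have e0 : gl (Finsupp.single k c) = c • Yg k := by
        rw [hgldef, Finsupp.linearCombination_single]
      rw [e0, mul_smul_comm]
      apply Submodule.smul_mem
      have e : Yg i * Yg k = gl (μ (mkl (a i * a k)))
          + ι (Q (a i * a k - al (μ (mkl (a i * a k))))) + rel1 i k := by
        simp only [rel1]
        abel
      rw [e]
      refine Submodule.add_mem _ (Submodule.add_mem _ ?_ ?_) ?_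
      · exact hSYW ⟨_, rfl⟩
      · exact hRIW ⟨_, rfl⟩
      · exact hJW (hJ1 i k)
  have hred : ∀ g : G, g ∈ W := by
    apply mem_of_single_mem
    intro w
    induction w with
    | ih1 x =>
      cases x with
      | inl j =>
        exact hRIW ⟨MonoidAlgebra.single (FreeSemigroup.of j) 1, hιgen j⟩
      | inr i =>
        refine hSYW ⟨Finsupp.single i 1, ?_⟩
        rw [hgldef, Finsupp.linearCombination_single, one_smul]
    | ih2 x y _ hy =>
      have e1 : (MonoidAlgebra.single (FreeSemigroup.of x * y) (1 : K) : G)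
          = gen x * MonoidAlgebra.single y 1 := by
        rw [MonoidAlgebra.single_mul_single, one_mul]
      rw [e1]
      obtain ⟨p, hp, q, hq, hpq⟩ := Submodule.mem_sup.1 hy
      obtain ⟨r, hr, jj, hjj, hrq⟩ := Submodule.mem_sup.1 hq
      obtain ⟨lam, rfl⟩ := hp
      obtain ⟨c, rfl⟩ := hr
      rw [← hpq, ← hrq, mul_add, mul_add]
      have hmulJ : gen x * jj ∈ W := hJW (mul_mem_idealSpan_left _ hjj)
      have hRIJW : RI ⊔ J ≤ W := le_sup_right
      cases x with
      | inl j =>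
        refine Submodule.add_mem _ ?_ (Submodule.add_mem _ ?_ hmulJ)
        · exact hRIJW (hXgl j lam)
        · refine hRIW ⟨MonoidAlgebra.single (FreeSemigroup.of j) 1 * c, ?_⟩
          show ι (MonoidAlgebra.single (FreeSemigroup.of j) 1 * c)
              = gen (Sum.inl j) * (nuaLinear ι) c
          rw [map_mul, hιgen]
          rfl
      | inr i =>
        refine Submodule.add_mem _ ?_ (Submodule.add_mem _ ?_ hmulJ)
        · exact hYgl i lam
        · exact hRIJW (hYι i c)
  have hglv : ∀ lam ∈ LinearMap.ker lc, gl lam ∈ RI ⊔ J := by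
    have hle : Submodule.span K (v : Set (↥t →₀ K)) ≤ Submodule.comap gl (RI ⊔ J) := by
      apply Submodule.span_le.2
      intro w hw
      refine Submodule.mem_comap.2 ?_
      have e : gl w = ι (Q (al w)) + rel4 w := by
        simp only [rel4]
        abel
      rw [e]
      exact Submodule.add_mem _ (Submodule.mem_sup_left ⟨_, rfl⟩)
        (Submodule.mem_sup_right (hJ4 w (Finset.mem_coe.1 hw)))
    intro lam hlam
    rw [← hv] at hlam
    exact Submodule.mem_comap.1 (hle hlam)
  -- kernel characterization
  have hkerφ : ∀ g : G, φ g = 0 → g ∈ J := by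
    intro g hg
    obtain ⟨p, hp, q, hq, hpq⟩ := Submodule.mem_sup.1 (hred g)
    obtain ⟨r, hr, jj, hjj, hrq⟩ := Submodule.mem_sup.1 hq
    obtain ⟨lam, rfl⟩ := hp
    obtain ⟨c, rfl⟩ := hr
    have hg' : g = gl lam + ((nuaLinear ι) c + jj) := by rw [← hpq, ← hrq]
    have hφjj : φ jj = 0 := hJker jj hjj
    have hval : al lam + ((f c : ↥B) : A) = 0 := by
      have h0 := hg
      rw [hg', map_add, map_add, hφgl, nuaLinear_apply, hφι, hφjj, add_zero] at h0
      exact h0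
    have hlam : lam ∈ LinearMap.ker lc := by
      rw [LinearMap.mem_ker, ← hmkal]
      have h1 := congrArg mkl hval
      rw [map_add, map_zero] at h1
      have h2 : mkl ((f c : ↥B) : A) = 0 := hBmk _ (f c).2
      rw [h2, add_zero] at h1
      exact h1
    obtain ⟨r', hr', jj', hjj', hr'q⟩ := Submodule.mem_sup.1 (hglv lam hlam)
    obtain ⟨c2, rfl⟩ := hr'
    have e4 : (ι (c2 + c) : G) = (nuaLinear ι) c2 + (nuaLinear ι) c := by
      rw [map_add]
      rfl
    have hg'' : g = ι (c2 + c) + (jj' + jj) := by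
      rw [hg', ← hr'q, e4]
      abel
    have hfc : f (c2 + c) = 0 := by
      have hφg2 : φ g = ((f (c2 + c) : ↥B) : A) := by
        rw [hg'', map_add, hφι, hJker _ (Submodule.add_mem _ hjj' hjj), add_zero]
      have : ((f (c2 + c) : ↥B) : A) = 0 := by rw [← hφg2, hg]
      exact Subtype.coe_injective (by simpa using this)
    have hc2c : c2 + c ∈ idealSpan K (rs : Set (FreeNUAlg K (Fin n))) := (hker _).1 hfc
    have hιmem : ι (c2 + c) ∈ J := by
      have h3 := apply_mem_idealSpan_image ι hc2c
      refine idealSpan_mono ?_ h3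
      intro z hz
      obtain ⟨c3, hc3, rfl⟩ := hz
      have : ι c3 ∈ (rs.image ι : Finset G) := Finset.mem_image_of_mem _ hc3
      simp only [T, Finset.coe_union, Set.mem_union, Finset.mem_coe]
      exact Or.inl (Or.inl (Or.inl (Or.inl this)))
    rw [hg'']
    exact Submodule.add_mem _ hιmem (Submodule.add_mem _ hjj' hjj)
  -- conclude
  refine nualgfp_of_finite (X := Fin n ⊕ ↥t) φ hφsurj T (fun x => ⟨fun h => hkerφ x h,
    fun h => hJker x h⟩)

end main

/-- Let `K` be a commutative ring, `A` a (not necessarily unital)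
associative `K`-algebra and `B` a two-sided ideal of `A` (a `K`-subalgebra closed under
left and right multiplication by arbitrary elements of `A`) such that the quotient `A/B`
is a finitely presented `K`-module. If `B` is finitely presented as a `K`-algebra, then
`A` is finitely presented as a `K`-algebra. -/
theorem fp_of_ideal_fp_of_quotient_module_fp
    (K A : Type*) [CommRing K]
    [NonUnitalRing A] [Module K A] [IsScalarTower K A A] [SMulCommClass K A A]
    (B : NonUnitalSubalgebra K A)
    (hBl : ∀ a b : A, b ∈ B → a * b ∈ B) (hBr : ∀ a b : A, b ∈ B → b * a ∈ B)
    (hmod : Module.FinitePresentation K (A ⧸ B.toSubmodule))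
    (hBfp : NUAlgFP K B) :
    NUAlgFP K A := by
  exact main_thm K A B hBl hBr hmod hBfp
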